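/- If (u, v) is a node in the epichristoffel tree with root an epichristoffel word w = u'v' where u' and v' are both the lexicographically least elements of their conjugacy classes and u' < v' lexicographically, then in every node (u, v) of the tree generated by the rules (u,v) ↦ (u, uv) and (u,v) ↦ (uv, v), the word uv is the lexicographically least element of its conjugacy class. -/

import Mathlib

/-- A Lyndon word: nonempty and lexicographically strictly smaller than all of its
nontrivial cyclic rotations. -/
def IsLyndon {α : Type*} [LinearOrder α] (w : List α) : Prop :=
  w ≠ [] ∧ ∀ n : ℕ, 0 < n → n < w.length → w < w.rotate n

/-- A word is lexicographically least in its conjugacy class if no cyclic rotation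
of it is strictly smaller. -/
def MinInConjClass {α : Type*} [LinearOrder α] (w : List α) : Prop :=
  ∀ n : ℕ, ¬ (w.rotate n < w)

/-- Membership in the (epichristoffel) tree with root `r`: the node `(u, v)` has
left child `(u, uv)` and right child `(uv, v)`. -/
inductive TreeNode {α : Type*} (r : List α × List α) : List α × List α → Prop
  | root : TreeNode r r
  | left (u v : List α) : TreeNode r (u, v) → TreeNode r (u, u ++ v)
  | right (u v : List α) : TreeNode r (u, v) → TreeNode r (u ++ v, v)

section Aux
variable {α : Type*} [LinearOrder α]

lemma lex_diff_append {u s : List α} (h : u < s) (hp : ¬ u <+: s) :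
    ∀ x y : List α, u ++ x < s ++ y := by
  induction (h : List.Lex (· < ·) u s) with
  | nil => exact absurd (List.nil_prefix) hp
  | @cons a l₁ l₂ _ ih =>
      intro x y
      exact List.Lex.cons (ih (by simpa using hp) x y)
  | rel hab => intro x y; exact List.Lex.rel hab

lemma append_lt_append_left_iff (u : List α) {x y : List α} :
    u ++ x < u ++ y ↔ x < y := by
  induction u with
  | nil => rfl
  | cons a l ih =>
      constructor
      · intro h
        exact ih.1 (((List.cons_lt_cons_iff).1 h).resolve_left (lt_irrefl a)).2
      · intro h
        exact List.Lex.cons (ih.2 h)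

/-- suffix characterization of Lyndon words -/
def SuffLyndon (w : List α) : Prop :=
  w ≠ [] ∧ ∀ p s : List α, w = p ++ s → p ≠ [] → s ≠ [] → w < s

lemma not_prefix_of_length_lt {u s : List α} (h : s.length < u.length) : ¬ u <+: s :=
  fun hp => absurd hp.length_le (not_le.2 h)

lemma suffLyndon_of_isLyndon {w : List α} (h : IsLyndon w) : SuffLyndon w := by
  obtain ⟨hne, hrot⟩ := h
  refine ⟨hne, fun p s hw hp hs => ?_⟩
  have hpl : 0 < p.length := List.length_pos_iff.2 hp
  have hsl : 0 < s.length := List.length_pos_iff.2 hs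
  have hwl : w.length = p.length + s.length := by rw [hw, List.length_append]
  have hplt : p.length < w.length := by omega
  have hslt : s.length < w.length := by omega
  have hrotp : w.rotate p.length = s ++ p := by
    rw [List.rotate_eq_drop_append_take hplt.le, hw, List.drop_left, List.take_left]
  have h1 : w < s ++ p := by rw [← hrotp]; exact hrot _ hpl hplt
  by_contra hns
  rcases lt_trichotomy w s with hlt | heq | hgt
  · exact hns hlt
  · have : w.length = s.length := by rw [heq]
    omega
  · -- s < w
    by_cases hpre : s <+: w
    · -- border case
      obtain ⟨t, hts⟩ := hpre
      have htne : t ≠ [] := by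
        intro h0
        rw [h0, List.append_nil] at hts
        have : s.length = w.length := by rw [hts]
        omega
      have hrots : w.rotate s.length = t ++ s := by
        rw [List.rotate_eq_drop_append_take hslt.le, ← hts, List.drop_left, List.take_left]
      have h2 : w < t ++ s := by rw [← hrots]; exact hrot _ hsl hslt
      have htp : t < p := by
        have h1' := h1
        rw [← hts, append_lt_append_left_iff] at h1'
        exact h1'
      have hlen : t.length = p.length := by
        have : w.length = s.length + t.length := by rw [← hts, List.length_append]
        omega
      have hnpre : ¬ t <+: p := by
        intro hpr
        have : t = p := List.IsPrefix.eq_of_length hpr hlen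
        rw [this] at htp
        exact lt_irrefl _ htp
      have h3 : t ++ s < p ++ s := lex_diff_append htp hnpre s s
      rw [← hw] at h3
      exact absurd h2 (asymm h3)
    · have h3 : s ++ p < w ++ [] := lex_diff_append hgt hpre p []
      rw [List.append_nil] at h3
      exact absurd h1 (asymm h3)

lemma isLyndon_of_suffLyndon {w : List α} (h : SuffLyndon w) : IsLyndon w := by
  obtain ⟨hne, hsuf⟩ := h
  refine ⟨hne, fun n hn hnl => ?_⟩
  rw [List.rotate_eq_drop_append_take hnl.le]
  set p := w.take n with hp
  set s := w.drop n with hs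
  have hw : w = p ++ s := (List.take_append_drop n w).symm
  have hpl : p.length = n := by rw [hp, List.length_take]; omega
  have hsl : s.length = w.length - n := by rw [hs, List.length_drop]
  have hpne : p ≠ [] := by
    intro h0
    rw [h0] at hpl
    simp at hpl
    omega
  have hsne : s ≠ [] := by
    intro h0
    rw [h0] at hsl
    simp at hsl
    omega
  have h1 : w < s := hsuf p s hw hpne hsne
  have hnpre : ¬ w <+: s := not_prefix_of_length_lt (by omega)
  have := lex_diff_append h1 hnpre [] p
  simpa using this

lemma append_lt_right {u v : List α} (hu : SuffLyndon u) (hv : SuffLyndon v)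
    (hlt : u < v) : u ++ v < v := by
  by_cases hpre : u <+: v
  · obtain ⟨t, ht⟩ := hpre
    have htne : t ≠ [] := by
      intro h0
      rw [h0, List.append_nil] at ht
      rw [ht] at hlt
      exact lt_irrefl _ hlt
    have h1 : v < t := hv.2 u t ht.symm hu.1 htne
    rw [← ht, append_lt_append_left_iff, ht]
    exact h1
  · have := lex_diff_append hlt hpre v []
    simpa using this

lemma suffLyndon_append {u v : List α} (hu : SuffLyndon u) (hv : SuffLyndon v)
    (hlt : u < v) : SuffLyndon (u ++ v) := by
  refine ⟨by simp [hu.1], fun p s hw hp hs => ?_⟩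
  rcases List.append_eq_append_iff.1 hw with ⟨q, hq1, hq2⟩ | ⟨q, hq1, hq2⟩
  · -- p = u ++ q, v = q ++ s
    by_cases hq : q = []
    · subst hq
      simp only [List.nil_append] at hq2
      rw [← hq2]
      exact append_lt_right hu hv hlt
    · exact lt_trans (append_lt_right hu hv hlt) (hv.2 q s hq2 hq hs)
  · -- u = p ++ q, s = q ++ v
    by_cases hq : q = []
    · subst hq
      simp only [List.nil_append] at hq2
      rw [hq2]
      exact append_lt_right hu hv hlt
    · have h1 : u < q := hu.2 p q hq1 hp hq
      have hql : q.length < u.length := by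
        have : u.length = p.length + q.length := by rw [hq1, List.length_append]
        have := List.length_pos_iff.2 hp
        omega
      have hnpre : ¬ u <+: q := not_prefix_of_length_lt hql
      rw [hq2]
      exact lex_diff_append h1 hnpre v v

lemma minInConjClass_of_isLyndon {w : List α} (h : IsLyndon w) : MinInConjClass w := by
  intro n hlt
  have hwl : 0 < w.length := List.length_pos_iff.2 h.1
  rw [← List.rotate_mod] at hlt
  rcases Nat.eq_zero_or_pos (n % w.length) with h0 | h0
  · rw [h0, List.rotate_zero] at hlt
    exact lt_irrefl _ hlt
  · exact absurd (h.2 _ h0 (Nat.mod_lt _ hwl)) (asymm hlt)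


lemma lt_append_of_ne_nil {α : Type*} [LinearOrder α] (u : List α) {t : List α}
    (ht : t ≠ []) : u < u ++ t := by
  have : u ++ [] < u ++ t := by
    rw [append_lt_append_left_iff]
    cases t with
    | nil => exact absurd rfl ht
    | cons a l => exact List.Lex.nil
  simpa using this

lemma tree_invariant {α : Type*} [LinearOrder α] {u' v' : List α}
    (hu : SuffLyndon u') (hv : SuffLyndon v') (hlt : u' < v')
    {p : List α × List α} (hnode : TreeNode (u', v') p) :
    SuffLyndon p.1 ∧ SuffLyndon p.2 ∧ p.1 < p.2 := by
  induction hnode with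
  | root => exact ⟨hu, hv, hlt⟩
  | left a b _ ih =>
      exact ⟨ih.1, suffLyndon_append ih.1 ih.2.1 ih.2.2,
        lt_append_of_ne_nil a ih.2.1.1⟩
  | right a b _ ih =>
      exact ⟨suffLyndon_append ih.1 ih.2.1 ih.2.2, ih.2.1,
        append_lt_right ih.1 ih.2.1 ih.2.2⟩

end Aux

/-- If the root `(u', v')` of the epichristoffel tree consists of two Lyndon words
(each least in its conjugacy class) with `u' < v'`, and `u'v'` is least in its
conjugacy class, then for every node `(u, v)` of the tree, the word `uv` is the
lexicographically least element of its conjugacy class. -/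
theorem tree_min_in_conj_class {α : Type*} [LinearOrder α] (u' v' : List α)
    (hu : IsLyndon u') (hv : IsLyndon v') (hlt : u' < v')
    (hroot : MinInConjClass (u' ++ v'))
    (u v : List α) (hnode : TreeNode (u', v') (u, v)) :
    MinInConjClass (u ++ v) := by
  obtain ⟨h1, h2, h3⟩ := tree_invariant (suffLyndon_of_isLyndon hu)
    (suffLyndon_of_isLyndon hv) hlt hnode
  exact minInConjClass_of_isLyndon (isLyndon_of_suffLyndon (suffLyndon_append h1 h2 h3))
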